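/- (Smith's theorem.) Let Γ be a distance-regular graph of diameter d ≥ 2 with valency k ≥ 3, and suppose Γ is imprimitive, i.e., for some i with 1 ≤ i ≤ d the distance-i graph Γ_i is disconnected. Then Γ is bipartite or Γ is antipodal (that is, the relation on vertices 'being equal or at distance d' is an equivalence relation). -/

import Mathlib

open SimpleGraph
open Finset

/-- A finite connected simple graph `G` is *distance-regular* with diameter `d` and
intersection numbers `b i` and `c i`: for any two vertices `u`, `v` at distance `i ≤ d`,
the vertex `v` has exactly `b i` neighbours at distance `i + 1` from `u` and exactly
`c i` neighbours at distance `i - 1` from `u`.  (This forces the conventions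
`c 0 = 0` and `b d = 0`.) -/
def IsDistRegular {V : Type*} [Fintype V] (G : SimpleGraph V) (d : ℕ) (b c : ℕ → ℕ) : Prop :=
  G.Connected ∧ G.diam = d ∧
    (∀ i ≤ d, ∀ u v : V, G.dist u v = i →
      {w : V | G.Adj v w ∧ G.dist u w = i + 1}.ncard = b i) ∧
    (∀ i ≤ d, ∀ u v : V, G.dist u v = i →
      {w : V | G.Adj v w ∧ G.dist u w = i - 1}.ncard = c i)

/-- The distance-`i` graph of `G`: same vertex set, two vertices adjacent iff they are
at distance exactly `i` in `G`. -/
def distGraph {V : Type*} (G : SimpleGraph V) (i : ℕ) : SimpleGraph V where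
  Adj u v := u ≠ v ∧ G.dist u v = i
  symm := by
    constructor
    intro u v h
    exact ⟨h.1.symm, by rw [SimpleGraph.dist_comm]; exact h.2⟩
  loopless := by
    constructor
    intro u h
    exact h.1 rfl

section SmithAux

variable {V : Type*} [Fintype V] {G : SimpleGraph V} {d : ℕ} {b c : ℕ → ℕ}

open scoped Classical in
private lemma ncard_eq_card (p : V → Prop) :
    {w : V | p w}.ncard = (univ.filter p).card := by
  rw [Set.ncard_eq_toFinset_card']; simp

/-- unbundling -/
private lemma hG_conn (hG : IsDistRegular G d b c) : G.Connected := hG.1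

private lemma dist_le_d (hG : IsDistRegular G d b c) (hd : 2 ≤ d) (u v : V) :
    G.dist u v ≤ d := by
  have h0 : G.diam ≠ 0 := by rw [hG.2.1]; omega
  have := SimpleGraph.dist_le_diam (G := G) (u := u) (v := v)
    (SimpleGraph.ediam_ne_top_of_diam_ne_zero h0)
  rwa [hG.2.1] at this

/-- shrink: step towards `u` -/
private lemma shrink (hG : IsDistRegular G d b c) {u v : V} {j : ℕ}
    (h : G.dist u v = j + 1) : ∃ w, G.Adj v w ∧ G.dist u w = j := by
  have hconn := hG.1
  obtain ⟨p, hp⟩ := hconn.exists_walk_length_eq_dist v u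
  rw [SimpleGraph.dist_comm, h] at hp
  cases p with
  | nil => simp at hp
  | cons hadj q =>
    rename_i w
    refine ⟨w, hadj, le_antisymm ?_ ?_⟩
    · calc G.dist u w = G.dist w u := SimpleGraph.dist_comm ..
      _ ≤ q.length := SimpleGraph.dist_le q
      _ = j := by simpa using hp
    · have htri : G.dist u v ≤ G.dist u w + G.dist w v := hconn.dist_triangle
      have : G.dist w v = 1 := by rw [SimpleGraph.dist_comm, dist_eq_one_iff_adj]; exact hadj
      omega

/-- midpoint on a geodesic -/
private lemma midpt (hG : IsDistRegular G d b c) {x z : V} {l m : ℕ}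
    (h : G.dist x z = l + m) : ∃ y, G.dist x y = l ∧ G.dist y z = m := by
  induction l generalizing x with
  | zero => exact ⟨x, by simpa using h⟩
  | succ l ih =>
    have h' : G.dist z x = (l + m) + 1 := by rw [SimpleGraph.dist_comm]; omega
    obtain ⟨w, hadj, hw⟩ := shrink hG h'
    have hwz : G.dist w z = l + m := by rwa [SimpleGraph.dist_comm]
    obtain ⟨y, hy1, hy2⟩ := ih hwz
    refine ⟨y, le_antisymm ?_ ?_, hy2⟩
    · have : G.dist x y ≤ G.dist x w + G.dist w y := hG.1.dist_triangle
      have hxw : G.dist x w = 1 := by rw [dist_eq_one_iff_adj]; exact hadj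
      omega
    · have : G.dist x z ≤ G.dist x y + G.dist y z := hG.1.dist_triangle
      omega

private lemma pair_at (hG : IsDistRegular G d b c) (hd : 2 ≤ d) {j : ℕ} (hj : j ≤ d) :
    ∃ u v : V, G.dist u v = j := by
  have : Nonempty V := hG.1.nonempty
  obtain ⟨u, v, huv⟩ := SimpleGraph.exists_dist_eq_diam (G := G)
  rw [hG.2.1] at huv
  obtain ⟨y, hy1, _⟩ := midpt hG (l := j) (m := d - j) (by omega : G.dist u v = j + (d - j))
  exact ⟨u, y, hy1⟩

private lemma b_pos (hG : IsDistRegular G d b c) (hd : 2 ≤ d) {j : ℕ} (hj : j < d) :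
    1 ≤ b j := by
  obtain ⟨x, z, hxz⟩ := pair_at hG hd (le_refl d)
  obtain ⟨y1, hy1, _⟩ := midpt hG (show G.dist x z = (j + 1) + (d - j - 1) by omega)
  obtain ⟨w, hadj, hw⟩ := shrink hG hy1
  have hmem : y1 ∈ {w' : V | G.Adj w w' ∧ G.dist x w' = j + 1} := ⟨hadj.symm, hy1⟩
  have := hG.2.2.1 j (by omega) x w hw
  have hpos : 0 < {w' : V | G.Adj w w' ∧ G.dist x w' = j + 1}.ncard := by
    rw [Set.ncard_pos (Set.toFinite _)]; exact ⟨y1, hmem⟩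
  omega

private lemma extend (hG : IsDistRegular G d b c) (hd : 2 ≤ d) {u v : V} {j : ℕ}
    (hj : j < d) (h : G.dist u v = j) : ∃ w, G.Adj v w ∧ G.dist u w = j + 1 := by
  have hcard := hG.2.2.1 j (by omega) u v h
  have hb := b_pos hG hd hj
  have : {w : V | G.Adj v w ∧ G.dist u w = j + 1}.Nonempty := by
    apply Set.nonempty_of_ncard_ne_zero; omega
  obtain ⟨w, hw⟩ := this
  exact ⟨w, hw.1, hw.2⟩

private lemma c_pos (hG : IsDistRegular G d b c) (hd : 2 ≤ d) {j : ℕ}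
    (hj1 : 1 ≤ j) (hjd : j ≤ d) : 1 ≤ c j := by
  obtain ⟨u, v, huv⟩ := pair_at hG hd hjd
  obtain ⟨w, hadj, hw⟩ := shrink hG (by omega : G.dist u v = (j - 1) + 1)
  have hcard := hG.2.2.2 j hjd u v huv
  have hpos : 0 < {w' : V | G.Adj v w' ∧ G.dist u w' = j - 1}.ncard := by
    rw [Set.ncard_pos (Set.toFinite _)]; exact ⟨w, hadj, hw⟩
  omega

/-- extend along a ray away from `z` -/
private lemma ray (hG : IsDistRegular G d b c) (hd : 2 ≤ d) {x z : V} {e : ℕ}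
    (h : G.dist x z = e) : ∀ m : ℕ, e + m ≤ d → ∃ y, G.dist x y = e + m ∧ G.dist z y = m := by
  intro m
  induction m with
  | zero => exact fun _ => ⟨z, by simpa using h, by simp⟩
  | succ m ih =>
    intro hm
    obtain ⟨y0, hy0, hzy0⟩ := ih (by omega)
    obtain ⟨w, hadj, hw⟩ := extend hG hd (by omega) hy0
    refine ⟨w, hw, le_antisymm ?_ ?_⟩
    · have h1 : G.dist z w ≤ G.dist z y0 + G.dist y0 w := hG.1.dist_triangle
      have h2 : G.dist y0 w = 1 := by rw [dist_eq_one_iff_adj]; exact hadj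
      omega
    · have h1 : G.dist x w ≤ G.dist x z + G.dist z w := hG.1.dist_triangle
      omega

open scoped Classical in
private noncomputable def nbrF (G : SimpleGraph V) [Fintype V] (u v : V) (j : ℕ) : Finset V :=
  univ.filter (fun w => G.Adj v w ∧ G.dist u w = j)

open scoped Classical in
private lemma nbrF_card (G : SimpleGraph V) (u v : V) (j : ℕ) :
    (nbrF G u v j).card = {w : V | G.Adj v w ∧ G.dist u w = j}.ncard := by
  rw [ncard_eq_card]; simp only [nbrF]; congr

open scoped Classical in
private lemma nbr_up (hG : IsDistRegular G d b c) {u v : V} {m : ℕ}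
    (hm : m ≤ d) (huv : G.dist u v = m) : (nbrF G u v (m+1)).card = b m := by
  rw [nbrF_card]; exact hG.2.2.1 m hm u v huv

open scoped Classical in
private lemma nbr_down (hG : IsDistRegular G d b c) {u v : V} {m j : ℕ}
    (hm : m ≤ d) (huv : G.dist u v = m) (hj : j + 1 = m) : (nbrF G u v j).card = c m := by
  rw [nbrF_card]
  have := hG.2.2.2 m hm u v huv
  have hj' : m - 1 = j := by omega
  rw [hj'] at this
  exact this

open scoped Classical in
private lemma nbr_far (hG : IsDistRegular G d b c) {u v : V} {m j : ℕ}
    (huv : G.dist u v = m) (hj : j + 1 < m ∨ m + 1 < j) : (nbrF G u v j).card = 0 := by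
  rw [Finset.card_eq_zero, nbrF, Finset.filter_eq_empty_iff]
  rintro w - ⟨hadj, hw⟩
  have h1 : G.dist u w ≤ G.dist u v + G.dist v w := hG.1.dist_triangle
  have h2 : G.dist u v ≤ G.dist u w + G.dist w v := hG.1.dist_triangle
  have h3 : G.dist v w = 1 := by rw [dist_eq_one_iff_adj]; exact hadj
  have h4 : G.dist w v = 1 := by rw [dist_eq_one_iff_adj]; exact hadj.symm
  omega

open scoped Classical in
private lemma nbr_total (hG : IsDistRegular G d b c) (v : V) :
    (univ.filter (fun w => G.Adj v w)).card = b 0 := by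
  have h0 : G.dist v v = 0 := by simp
  have h1 := nbr_up hG (Nat.zero_le d) h0
  rw [← h1, nbrF]
  congr 1
  ext w
  simp only [Finset.mem_filter, Finset.mem_univ, true_and, Nat.zero_add]
  exact ⟨fun h => ⟨h, by rw [dist_eq_one_iff_adj]; exact h⟩, fun h => h.1⟩

open scoped Classical in
private lemma nbr_split (hG : IsDistRegular G d b c) {u v : V} {m : ℕ}
    (hm1 : 1 ≤ m) (hm : m ≤ d) (huv : G.dist u v = m) :
    c m + (nbrF G u v m).card + b m = b 0 := by
  have hunion : univ.filter (fun w => G.Adj v w)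
      = (nbrF G u v (m-1) ∪ nbrF G u v m) ∪ nbrF G u v (m+1) := by
    ext w
    simp only [nbrF, Finset.mem_union, Finset.mem_filter, Finset.mem_univ, true_and]
    constructor
    · intro hadj
      have h1 : G.dist u w ≤ G.dist u v + G.dist v w := hG.1.dist_triangle
      have h2 : G.dist u v ≤ G.dist u w + G.dist w v := hG.1.dist_triangle
      have h3 : G.dist v w = 1 := by rw [dist_eq_one_iff_adj]; exact hadj
      have h4 : G.dist w v = 1 := by rw [dist_eq_one_iff_adj]; exact hadj.symm
      have : G.dist u w = m - 1 ∨ G.dist u w = m ∨ G.dist u w = m + 1 := by omega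
      rcases this with h | h | h
      · exact Or.inl (Or.inl ⟨hadj, h⟩)
      · exact Or.inl (Or.inr ⟨hadj, h⟩)
      · exact Or.inr ⟨hadj, h⟩
    · rintro ((⟨h, -⟩ | ⟨h, -⟩) | ⟨h, -⟩) <;> exact h
  have hd1 : Disjoint (nbrF G u v (m-1)) (nbrF G u v m) := by
    rw [nbrF, nbrF, Finset.disjoint_filter]
    rintro w - ⟨-, h1⟩ ⟨-, h2⟩; omega
  have hd2 : Disjoint (nbrF G u v (m-1) ∪ nbrF G u v m) (nbrF G u v (m+1)) := by
    rw [Finset.disjoint_union_left]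
    constructor <;> (rw [nbrF, nbrF, Finset.disjoint_filter]; rintro w - ⟨-, h1⟩ ⟨-, h2⟩; omega)
  have htot := nbr_total hG v
  rw [hunion, Finset.card_union_of_disjoint hd2, Finset.card_union_of_disjoint hd1] at htot
  rw [nbr_down hG hm huv (by omega), nbr_up hG hm huv] at htot
  omega

open scoped Classical in
private lemma nbrF_det (hG : IsDistRegular G d b c) (hd : 2 ≤ d) {u v u' v' : V} {m : ℕ}
    (huv : G.dist u v = m) (hu'v' : G.dist u' v' = m) (j : ℕ) :
    (nbrF G u v j).card = (nbrF G u' v' j).card := by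
  have hm : m ≤ d := huv ▸ dist_le_d hG hd u v
  rcases Nat.lt_trichotomy j m with h | h | h
  · rcases Nat.eq_or_lt_of_le (Nat.succ_le_of_lt h) with h' | h'
    · rw [nbr_down hG hm huv h', nbr_down hG hm hu'v' h']
    · rw [nbr_far hG huv (Or.inl h'), nbr_far hG hu'v' (Or.inl h')]
  · subst h
    rcases Nat.eq_zero_or_pos j with h0 | h0
    · subst h0
      have hu : u = v := by rwa [hG.1.dist_eq_zero_iff] at huv
      have hu' : u' = v' := by rwa [hG.1.dist_eq_zero_iff] at hu'v'
      subst hu; subst hu'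
      have e1 : (nbrF G u u 0).card = 0 := by
        rw [Finset.card_eq_zero, nbrF, Finset.filter_eq_empty_iff]
        rintro w - ⟨hadj, hw⟩
        rw [hG.1.dist_eq_zero_iff] at hw
        exact G.loopless.irrefl u (hw ▸ hadj)
      have e2 : (nbrF G u' u' 0).card = 0 := by
        rw [Finset.card_eq_zero, nbrF, Finset.filter_eq_empty_iff]
        rintro w - ⟨hadj, hw⟩
        rw [hG.1.dist_eq_zero_iff] at hw
        exact G.loopless.irrefl u' (hw ▸ hadj)
      rw [e1, e2]
    · have s1 := nbr_split hG h0 hm huv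
      have s2 := nbr_split hG h0 hm hu'v'
      omega
  · rcases Nat.eq_or_lt_of_le (Nat.succ_le_of_lt h) with h' | h'
    · rw [← h', nbr_up hG hm huv, nbr_up hG hm hu'v']
    · rw [nbr_far hG huv (Or.inr h'), nbr_far hG hu'v' (Or.inr h')]
open scoped Classical in
private noncomputable def cnt (G : SimpleGraph V) [Fintype V] (l i : ℕ) (x z : V) : ℕ :=
  (univ.filter (fun y => G.dist x y = l ∧ G.dist z y = i)).card

private def CntDet (G : SimpleGraph V) [Fintype V] (l : ℕ) : Prop :=
  ∀ (i : ℕ) (x z x' z' : V), G.dist x z = G.dist x' z' → cnt G l i x z = cnt G l i x' z'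

open scoped Classical in
private lemma cnt_zero (hG : IsDistRegular G d b c) (i : ℕ) (x z : V) :
    cnt G 0 i x z = if G.dist x z = i then 1 else 0 := by
  rw [cnt]
  split_ifs with h
  · rw [Finset.card_eq_one]
    refine ⟨x, ?_⟩
    ext y
    simp only [Finset.mem_filter, Finset.mem_univ, true_and, Finset.mem_singleton]
    constructor
    · rintro ⟨h1, -⟩; rw [hG.1.dist_eq_zero_iff] at h1; exact h1.symm
    · rintro rfl
      refine ⟨by simp, ?_⟩
      rwa [SimpleGraph.dist_comm] at h
  · rw [Finset.card_eq_zero, Finset.filter_eq_empty_iff]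
    rintro y - ⟨h1, h2⟩
    rw [hG.1.dist_eq_zero_iff] at h1
    subst h1
    rw [SimpleGraph.dist_comm] at h2
    exact h h2

private lemma cnt_det_zero (hG : IsDistRegular G d b c) : CntDet G 0 := by
  intro i x z x' z' hm
  rw [cnt_zero hG, cnt_zero hG, hm]

open scoped Classical in
private lemma cnt_big (hG : IsDistRegular G d b c) (hd : 2 ≤ d) {l : ℕ} (hl : d < l)
    (i : ℕ) (x z : V) : cnt G l i x z = 0 := by
  rw [cnt, Finset.card_eq_zero, Finset.filter_eq_empty_iff]
  rintro y - ⟨h1, -⟩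
  have := dist_le_d hG hd x y
  omega

open scoped Classical in
private lemma cnt_one_eq (G : SimpleGraph V) [Fintype V] (i : ℕ) (x z : V) :
    cnt G 1 i x z = (nbrF G z x i).card := by
  rw [cnt, nbrF]
  congr 1
  ext y
  simp only [Finset.mem_filter, Finset.mem_univ, true_and, dist_eq_one_iff_adj]

private lemma cnt_det_one (hG : IsDistRegular G d b c) (hd : 2 ≤ d) : CntDet G 1 := by
  intro i x z x' z' hm
  rw [cnt_one_eq, cnt_one_eq]
  have h1 : G.dist z x = G.dist x z := SimpleGraph.dist_comm ..
  have h2 : G.dist z' x' = G.dist x z := by rw [hm, SimpleGraph.dist_comm]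
  exact nbrF_det hG hd h1 h2 i

private noncomputable def Cval (hG : IsDistRegular G d b c) (hd : 2 ≤ d) (l i m : ℕ) : ℕ :=
  if h : m ≤ d then
    cnt G l i (pair_at hG hd h).choose (pair_at hG hd h).choose_spec.choose
  else 0

private lemma cval_spec (hG : IsDistRegular G d b c) (hd : 2 ≤ d) {l : ℕ}
    (hcd : CntDet G l) (i : ℕ) (x z : V) :
    cnt G l i x z = Cval hG hd l i (G.dist x z) := by
  have hle : G.dist x z ≤ d := dist_le_d hG hd x z
  rw [Cval, dif_pos hle]
  exact hcd i x z _ _ ((pair_at hG hd hle).choose_spec.choose_spec).symm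

open scoped Classical in
private lemma cnt_rec (hG : IsDistRegular G d b c) (hd : 2 ≤ d) {l : ℕ}
    (hl2 : 2 ≤ l) (hld : l ≤ d) (i : ℕ) (x z : V) :
    ∑ w ∈ univ.filter (fun w => G.Adj x w), cnt G (l-1) i w z
      = b (l-2) * cnt G (l-2) i x z + (b 0 - b (l-1) - c (l-1)) * cnt G (l-1) i x z
        + c l * cnt G l i x z := by
  have step1 : ∑ w ∈ univ.filter (fun w => G.Adj x w), cnt G (l-1) i w z
      = ∑ y ∈ (univ : Finset V),
          (univ.filter (fun w => G.Adj x w ∧ G.dist w y = l-1 ∧ G.dist z y = i)).card := by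
    simp only [cnt, Finset.card_filter]
    rw [Finset.sum_filter]
    have hptw : ∀ w : V,
        (if G.Adj x w then (∑ y : V, if G.dist w y = l-1 ∧ G.dist z y = i then 1 else 0) else 0)
        = ∑ y : V, if G.Adj x w ∧ G.dist w y = l-1 ∧ G.dist z y = i then 1 else 0 := by
      intro w
      by_cases h : G.Adj x w <;> simp [h]
    calc ∑ w : V, (if G.Adj x w then (∑ y : V, if G.dist w y = l-1 ∧ G.dist z y = i then 1 else 0) else 0)
        = ∑ w : V, ∑ y : V, (if G.Adj x w ∧ G.dist w y = l-1 ∧ G.dist z y = i then 1 else 0) :=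
          Finset.sum_congr rfl fun w _ => hptw w
      _ = ∑ y : V, ∑ w : V, (if G.Adj x w ∧ G.dist w y = l-1 ∧ G.dist z y = i then 1 else 0) :=
          Finset.sum_comm
  have step2 : ∀ y : V,
      (univ.filter (fun w => G.Adj x w ∧ G.dist w y = l-1 ∧ G.dist z y = i)).card
      = b (l-2) * (if G.dist x y = l-2 ∧ G.dist z y = i then 1 else 0)
        + (b 0 - b (l-1) - c (l-1)) * (if G.dist x y = l-1 ∧ G.dist z y = i then 1 else 0)
        + c l * (if G.dist x y = l ∧ G.dist z y = i then 1 else 0) := by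
    intro y
    by_cases hi : G.dist z y = i
    · simp only [hi, and_true]
      have hfil : (univ.filter (fun w => G.Adj x w ∧ G.dist w y = l-1))
          = nbrF G y x (l-1) := by
        rw [nbrF]
        ext w
        simp only [Finset.mem_filter, Finset.mem_univ, true_and]
        constructor
        · rintro ⟨h1, h2⟩; exact ⟨h1, by rwa [SimpleGraph.dist_comm]⟩
        · rintro ⟨h1, h2⟩; exact ⟨h1, by rwa [SimpleGraph.dist_comm]⟩
      rw [hfil]
      have hyx : G.dist y x = G.dist x y := SimpleGraph.dist_comm ..
      have hxyd : G.dist x y ≤ d := dist_le_d hG hd x y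
      rcases Nat.lt_trichotomy (G.dist x y) (l-1) with h | h | h
      · rcases Nat.eq_or_lt_of_le (Nat.succ_le_of_lt h) with h' | h'
        · -- dist x y = l-2
          have hxy : G.dist x y = l - 2 := by omega
          have hcard : (nbrF G y x (l-1)).card = b (l-2) := by
            have hu := nbr_up hG (m := l-2) (u := y) (v := x) (by omega) (by omega)
            have he : l - 2 + 1 = l - 1 := by omega
            rwa [he] at hu
          rw [hcard, if_pos hxy, if_neg (by omega), if_neg (by omega)]
          simp
        · -- far: dist x y + 1 < l - 1
          have hcard : (nbrF G y x (l-1)).card = 0 :=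
            nbr_far hG (m := G.dist x y) (by omega) (Or.inr (by omega))
          rw [hcard, if_neg (by omega), if_neg (by omega), if_neg (by omega)]
          simp
      · -- dist x y = l-1
        have hcard : (nbrF G y x (l-1)).card = b 0 - b (l-1) - c (l-1) := by
          have hs := nbr_split hG (m := l-1) (u := y) (v := x) (by omega) (by omega) (by omega)
          omega
        rw [hcard, if_neg (by omega), if_pos h, if_neg (by omega)]
        simp
      · rcases Nat.eq_or_lt_of_le (Nat.succ_le_of_lt h) with h' | h'
        · -- dist x y = l
          have hxy : G.dist x y = l := by omega
          have hcard : (nbrF G y x (l-1)).card = c l := by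
            apply nbr_down hG (m := l) (u := y) (v := x) hld (by omega) (by omega)
          rw [hcard, if_neg (by omega), if_neg (by omega), if_pos hxy]
          simp
        · -- far above
          have hcard : (nbrF G y x (l-1)).card = 0 :=
            nbr_far hG (m := G.dist x y) (by omega) (Or.inl (by omega))
          rw [hcard, if_neg (by omega), if_neg (by omega), if_neg (by omega)]
          simp
    · rw [Finset.card_eq_zero.mpr, if_neg (by tauto), if_neg (by tauto), if_neg (by tauto)]
      · simp
      · rw [Finset.filter_eq_empty_iff]
        rintro w - ⟨-, -, h⟩
        exact hi h
  rw [step1, Finset.sum_congr rfl (fun y _ => step2 y), Finset.sum_add_distrib,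
    Finset.sum_add_distrib, ← Finset.mul_sum, ← Finset.mul_sum, ← Finset.mul_sum]
  simp only [cnt, Finset.card_filter]

open scoped Classical in
private lemma cnt_sum_det (hG : IsDistRegular G d b c) (hd : 2 ≤ d) {l' : ℕ}
    (hcd : CntDet G l') (i : ℕ) {x z x' z' : V} (hm : G.dist x z = G.dist x' z') :
    ∑ w ∈ univ.filter (fun w => G.Adj x w), cnt G l' i w z
      = ∑ w ∈ univ.filter (fun w => G.Adj x' w), cnt G l' i w z' := by
  set m := G.dist x z with hmdef
  have key : ∀ X Z : V, G.dist X Z = m →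
      ∑ w ∈ univ.filter (fun w => G.Adj X w), cnt G l' i w Z
      = Cval hG hd l' i (m-1) * (nbrF G Z X (m-1)).card
        + Cval hG hd l' i m * (nbrF G Z X m).card
        + Cval hG hd l' i (m+1) * (nbrF G Z X (m+1)).card := by
    intro X Z hXZ
    have hZX : G.dist Z X = m := by rw [SimpleGraph.dist_comm]; exact hXZ
    have hrw : ∑ w ∈ univ.filter (fun w => G.Adj X w), cnt G l' i w Z
        = ∑ w ∈ univ.filter (fun w => G.Adj X w), Cval hG hd l' i (G.dist Z w) := by
      refine Finset.sum_congr rfl fun w _ => ?_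
      rw [cval_spec hG hd hcd, SimpleGraph.dist_comm]
    rw [hrw]
    have hunion : univ.filter (fun w => G.Adj X w)
        = (nbrF G Z X (m-1) ∪ nbrF G Z X m) ∪ nbrF G Z X (m+1) := by
      ext w
      simp only [nbrF, Finset.mem_union, Finset.mem_filter, Finset.mem_univ, true_and]
      constructor
      · intro hadj
        have h1 : G.dist Z w ≤ G.dist Z X + G.dist X w := hG.1.dist_triangle
        have h2 : G.dist Z X ≤ G.dist Z w + G.dist w X := hG.1.dist_triangle
        have h3 : G.dist X w = 1 := by rw [dist_eq_one_iff_adj]; exact hadj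
        have h4 : G.dist w X = 1 := by rw [dist_eq_one_iff_adj]; exact hadj.symm
        have : G.dist Z w = m - 1 ∨ G.dist Z w = m ∨ G.dist Z w = m + 1 := by omega
        rcases this with h | h | h
        · exact Or.inl (Or.inl ⟨hadj, h⟩)
        · exact Or.inl (Or.inr ⟨hadj, h⟩)
        · exact Or.inr ⟨hadj, h⟩
      · rintro ((⟨h, -⟩ | ⟨h, -⟩) | ⟨h, -⟩) <;> exact h
    have hempty : m = 0 → nbrF G Z X m = ∅ := by
      intro h0
      rw [nbrF, Finset.filter_eq_empty_iff]
      rintro w - ⟨hadj, hw⟩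
      have hZXe : Z = X := by rw [← hG.1.dist_eq_zero_iff (u := Z) (v := X), hZX, h0]
      subst hZXe
      rw [h0, hG.1.dist_eq_zero_iff] at hw
      subst hw
      exact G.loopless.irrefl _ hadj
    have hd1 : Disjoint (nbrF G Z X (m-1)) (nbrF G Z X m) := by
      rcases Nat.eq_zero_or_pos m with h0 | h0
      · have e1 := hempty h0
        have e2 : m - 1 = m := by omega
        rw [e2, e1]
        simp
      · rw [nbrF, nbrF, Finset.disjoint_filter]
        rintro w - ⟨-, h1⟩ ⟨-, h2⟩
        omega
    have hd2 : Disjoint (nbrF G Z X (m-1) ∪ nbrF G Z X m) (nbrF G Z X (m+1)) := by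
      rw [Finset.disjoint_union_left]
      constructor <;>
        (rw [nbrF, nbrF, Finset.disjoint_filter]; rintro w - ⟨-, h1⟩ ⟨-, h2⟩; omega)
    have hsum : ∀ j : ℕ, ∑ w ∈ nbrF G Z X j, Cval hG hd l' i (G.dist Z w)
        = Cval hG hd l' i j * (nbrF G Z X j).card := by
      intro j
      have hc : ∀ w ∈ nbrF G Z X j, Cval hG hd l' i (G.dist Z w) = Cval hG hd l' i j := by
        intro w hw
        rw [nbrF, Finset.mem_filter] at hw
        rw [hw.2.2]
      rw [Finset.sum_congr rfl hc, Finset.sum_const, smul_eq_mul, mul_comm]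
    rw [hunion, Finset.sum_union hd2, Finset.sum_union hd1, hsum, hsum, hsum]
  have hx'z' : G.dist x' z' = m := by rw [← hm]
  rw [key x z hmdef.symm, key x' z' hx'z']
  have e1 : G.dist z x = m := (SimpleGraph.dist_comm ..).trans hmdef.symm
  have e2 : G.dist z' x' = m := by rw [SimpleGraph.dist_comm]; exact hx'z'
  rw [nbrF_det hG hd e1 e2 (m-1), nbrF_det hG hd e1 e2 m, nbrF_det hG hd e1 e2 (m+1)]

private lemma cnt_det (hG : IsDistRegular G d b c) (hd : 2 ≤ d) : ∀ l : ℕ, CntDet G l := by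
  intro l
  induction l using Nat.strong_induction_on with
  | _ l ih =>
    match l with
    | 0 => exact cnt_det_zero hG
    | 1 => exact cnt_det_one hG hd
    | (n+2) =>
      by_cases hld : n + 2 ≤ d
      · intro i x z x' z' hm
        have e1 := cnt_rec hG hd (l := n+2) (by omega) hld i x z
        have e2 := cnt_rec hG hd (l := n+2) (by omega) hld i x' z'
        have e3 := cnt_sum_det hG hd (l' := n+1) (ih (n+1) (by omega)) i hm
        simp only [show n+2-1 = n+1 from rfl, show n+2-2 = n from rfl] at e1 e2
        have h1 : cnt G (n+1) i x z = cnt G (n+1) i x' z' := ih (n+1) (by omega) i x z x' z' hm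
        have h0 : cnt G n i x z = cnt G n i x' z' := ih n (by omega) i x z x' z' hm
        have hc : 1 ≤ c (n+2) := c_pos hG hd (by omega) hld
        rw [h0, h1] at e1
        have hmul : c (n+2) * cnt G (n+2) i x z = c (n+2) * cnt G (n+2) i x' z' := by omega
        exact Nat.eq_of_mul_eq_mul_left (by omega) hmul
      · intro i x z x' z' hm
        rw [cnt_big hG hd (by omega), cnt_big hG hd (by omega)]

open scoped Classical in
private lemma walk_det (hG : IsDistRegular G d b c) (hd : 2 ≤ d) {i0 : ℕ} (hi0 : 1 ≤ i0) :
    ∀ {u v : V} (_ : (distGraph G i0).Walk u v) (x y : V),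
      G.dist x y = G.dist u v → (distGraph G i0).Reachable x y := by
  intro u v p
  induction p with
  | nil =>
    intro x y hxy
    have h0 : G.dist x y = 0 := by rwa [SimpleGraph.dist_self] at hxy
    rw [hG.1.dist_eq_zero_iff] at h0
    exact h0 ▸ Reachable.refl x
  | @cons u u1 v hadj p ih =>
    intro x y hxy
    obtain ⟨hne, hdi⟩ := hadj
    have hcnt : 0 < cnt G i0 (G.dist u1 v) u v := by
      rw [cnt, Finset.card_pos]
      refine ⟨u1, ?_⟩
      simp only [Finset.mem_filter, Finset.mem_univ, true_and]
      exact ⟨hdi, SimpleGraph.dist_comm ..⟩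
    have heq := cnt_det hG hd i0 (G.dist u1 v) u v x y hxy.symm
    rw [heq] at hcnt
    rw [cnt, Finset.card_pos] at hcnt
    obtain ⟨s, hs⟩ := hcnt
    simp only [Finset.mem_filter, Finset.mem_univ, true_and] at hs
    obtain ⟨hs1, hs2⟩ := hs
    have hxs : (distGraph G i0).Adj x s := by
      refine ⟨?_, hs1⟩
      rintro rfl
      rw [hG.1.dist_eq_zero_iff.mpr rfl] at hs1
      omega
    have hsy : (distGraph G i0).Reachable s y := by
      apply ih s y
      rw [SimpleGraph.dist_comm]
      exact hs2
    exact hxs.reachable.trans hsy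
private def InJ (G : SimpleGraph V) (i0 j : ℕ) : Prop :=
  ∃ u v : V, (distGraph G i0).Reachable u v ∧ G.dist u v = j

private lemma reach_of_dist (hG : IsDistRegular G d b c) (hd : 2 ≤ d) {i0 j : ℕ}
    (hi0 : 1 ≤ i0) (hj : InJ G i0 j) {x y : V} (hxy : G.dist x y = j) :
    (distGraph G i0).Reachable x y := by
  obtain ⟨u, v, hr, huv⟩ := hj
  obtain ⟨p⟩ := hr
  exact walk_det hG hd hi0 p x y (hxy.trans huv.symm)

private lemma inJ_le (hG : IsDistRegular G d b c) (hd : 2 ≤ d) {i0 j : ℕ}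
    (hj : InJ G i0 j) : j ≤ d := by
  obtain ⟨u, v, -, huv⟩ := hj
  exact huv ▸ dist_le_d hG hd u v

private lemma inJ_zero (hG : IsDistRegular G d b c) (i0 : ℕ) : InJ G i0 0 := by
  obtain ⟨x⟩ := hG.1.nonempty
  exact ⟨x, x, Reachable.refl x, by simp⟩

private lemma inJ_i0 (hG : IsDistRegular G d b c) (hd : 2 ≤ d) {i0 : ℕ}
    (hi1 : 1 ≤ i0) (hid : i0 ≤ d) : InJ G i0 i0 := by
  obtain ⟨u, v, huv⟩ := pair_at hG hd hid
  have hne : u ≠ v := by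
    rintro rfl
    rw [SimpleGraph.dist_self] at huv
    omega
  exact ⟨u, v, (SimpleGraph.Adj.reachable (⟨hne, huv⟩ : (distGraph G i0).Adj u v)), huv⟩

private lemma inJ_one_false (hG : IsDistRegular G d b c) (hd : 2 ≤ d) {i0 : ℕ}
    (hi1 : 1 ≤ i0) (hdisc : ¬ (distGraph G i0).Connected) : ¬ InJ G i0 1 := by
  intro h1
  have hall : ∀ j : ℕ, ∀ u v : V, G.dist u v = j → (distGraph G i0).Reachable u v := by
    intro j
    induction j with
    | zero =>
      intro u v huv
      rw [hG.1.dist_eq_zero_iff] at huv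
      exact huv ▸ Reachable.refl u
    | succ j ihj =>
      intro u v huv
      obtain ⟨y, hy1, hy2⟩ := midpt hG (show G.dist u v = j + 1 from huv)
      exact (ihj u y hy1).trans (reach_of_dist hG hd hi1 h1 hy2)
  have hne : Nonempty V := hG.1.nonempty
  exact hdisc ((connected_iff _).mpr ⟨fun u v => hall (G.dist u v) u v rfl, hne⟩)

private lemma inJ_add (hG : IsDistRegular G d b c) (hd : 2 ≤ d) {i0 l m : ℕ}
    (hi1 : 1 ≤ i0) (hl : InJ G i0 l) (hm : InJ G i0 m) (hlm : l + m ≤ d) :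
    InJ G i0 (l + m) := by
  obtain ⟨u, v, huv⟩ := pair_at hG hd hlm
  obtain ⟨y, hy1, hy2⟩ := midpt hG huv
  exact ⟨u, v, (reach_of_dist hG hd hi1 hl hy1).trans (reach_of_dist hG hd hi1 hm hy2), huv⟩

private lemma inJ_sub (hG : IsDistRegular G d b c) (hd : 2 ≤ d) {i0 l m : ℕ}
    (hi1 : 1 ≤ i0) (hl : InJ G i0 l) (hm : InJ G i0 m) (hml : m ≤ l) :
    InJ G i0 (l - m) := by
  have hld : l ≤ d := inJ_le hG hd hl
  obtain ⟨x, z, hxz⟩ := pair_at hG hd (show l - m ≤ d by omega)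
  obtain ⟨y, hy1, hy2⟩ := ray hG hd hxz m (by omega)
  have he : l - m + m = l := by omega
  rw [he] at hy1
  have r1 : (distGraph G i0).Reachable x y := reach_of_dist hG hd hi1 hl hy1
  have r2 : (distGraph G i0).Reachable z y := reach_of_dist hG hd hi1 hm hy2
  exact ⟨x, z, r1.trans r2.symm, hxz⟩

private lemma noSame (hG : IsDistRegular G d b c) (hd : 2 ≤ d) {i0 j : ℕ}
    (hi1 : 1 ≤ i0) (hno1 : ¬ InJ G i0 1) (hj : InJ G i0 j) {x y z : V}
    (hxy : G.dist x y = j) (hxz : G.dist x z = j) (hadj : G.Adj y z) : False := by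
  have r1 := reach_of_dist hG hd hi1 hj hxy
  have r2 := reach_of_dist hG hd hi1 hj hxz
  exact hno1 ⟨y, z, r1.symm.trans r2, by rw [dist_eq_one_iff_adj]; exact hadj⟩
private lemma odd_case (hG : IsDistRegular G d b c) (hd : 2 ≤ d) {i0 : ℕ}
    (hi1 : 1 ≤ i0) (hno1 : ¬ InJ G i0 1) (h2 : InJ G i0 2)
    (hEv : ∀ jj : ℕ, 2 ∣ jj → jj ≤ d → InJ G i0 jj)
    (hdvd : ∀ jj : ℕ, InJ G i0 jj → 2 ∣ jj)
    {j : ℕ} (hj3 : 3 ≤ j) (hjd : j ≤ d) (hjodd : ¬ 2 ∣ j)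
    {x y z : V} (hxy : G.dist x y = j) (hxz : G.dist x z = j) (hadj : G.Adj y z) :
    False := by
  obtain ⟨w, hwy, hww⟩ := shrink hG (show G.dist x y = (j-1) + 1 by omega)
  -- hwy : G.Adj y w, hww : G.dist x w = j - 1
  have hyz : G.dist y z = 1 := by rw [dist_eq_one_iff_adj]; exact hadj
  have hwy1 : G.dist w y = 1 := by rw [dist_eq_one_iff_adj]; exact hwy.symm
  have hb1 : G.dist w z ≤ 2 := by
    have := hG.1.dist_triangle (u := w) (v := y) (w := z); omega
  have hb2 : 1 ≤ G.dist w z := by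
    have := hG.1.dist_triangle (u := x) (v := w) (w := z); omega
  rcases (show G.dist w z = 1 ∨ G.dist w z = 2 by omega) with hwz | hwz
  · -- w adjacent to z
    have hadjwz : G.Adj w z := by rwa [dist_eq_one_iff_adj] at hwz
    obtain ⟨v, hvw, hvv⟩ := shrink hG (show G.dist x w = (j-2) + 1 by omega)
    -- hvw : G.Adj w v, hvv : G.dist x v = j - 2
    have hvw1 : G.dist v w = 1 := by rw [dist_eq_one_iff_adj]; exact hvw.symm
    have hvy : G.dist v y = 2 := by
      have t1 := hG.1.dist_triangle (u := v) (v := w) (w := y)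
      have t2 := hG.1.dist_triangle (u := x) (v := v) (w := y)
      omega
    have hvz : G.dist v z = 2 := by
      have hwz1 : G.dist w z = 1 := hwz
      have t1 := hG.1.dist_triangle (u := v) (v := w) (w := z)
      have t2 := hG.1.dist_triangle (u := x) (v := v) (w := z)
      omega
    have r1 := reach_of_dist hG hd hi1 h2 hvy
    have r2 := reach_of_dist hG hd hi1 h2 hvz
    exact hno1 ⟨y, z, r1.symm.trans r2, hyz⟩
  · -- dist w z = 2
    have hj1 : InJ G i0 (j-1) := hEv (j-1) (by omega) (by omega)
    have r1 := reach_of_dist hG hd hi1 hj1 hww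
    have r2 := reach_of_dist hG hd hi1 h2 hwz
    have r3 := reach_of_dist hG hd hi1 hj1 (show G.dist x w = j - 1 from hww)
    have rxz : (distGraph G i0).Reachable x z := r1.trans r2
    have : InJ G i0 j := ⟨x, z, rxz, hxz⟩
    exact hjodd (hdvd j this)

open scoped Classical in
private lemma j1_case (hG : IsDistRegular G d b c) (hd : 2 ≤ d) {i0 : ℕ}
    (hi1 : 1 ≤ i0) (hno1 : ¬ InJ G i0 1) (h2 : InJ G i0 2)
    (hEv : ∀ jj : ℕ, 2 ∣ jj → jj ≤ d → InJ G i0 jj)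
    (hdvd : ∀ jj : ℕ, InJ G i0 jj → 2 ∣ jj) (hd3 : 3 ≤ d)
    {x y z : V} (hxy : G.dist x y = 1) (hxz : G.dist x z = 1) (hadj : G.Adj y z) :
    False := by
  -- x is a common neighbour of y and z, so the distance-1 "a₁" count is ≥ 1
  have hyz : G.dist y z = 1 := by rw [dist_eq_one_iff_adj]; exact hadj
  have hxmem : x ∈ nbrF G y z 1 := by
    rw [nbrF, Finset.mem_filter]
    refine ⟨Finset.mem_univ x, ?_, ?_⟩
    · rw [← dist_eq_one_iff_adj, SimpleGraph.dist_comm]; exact hxz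
    · rw [SimpleGraph.dist_comm]; exact hxy
  have ha1 : 0 < (nbrF G y z 1).card := Finset.card_pos.mpr ⟨x, hxmem⟩
  -- get a pair at distance 3 and a point q at distance 2 on the geodesic
  obtain ⟨w0, y0, h3⟩ := pair_at hG hd hd3
  obtain ⟨q, hq1, hq2⟩ := midpt hG (show G.dist w0 y0 = 2 + 1 from h3)
  -- transfer the count to the pair (q, y0)
  have htrans : (nbrF G q y0 1).card = (nbrF G y z 1).card :=
    nbrF_det hG hd (m := 1) hq2 hyz 1
  have : 0 < (nbrF G q y0 1).card := by omega
  rw [Finset.card_pos] at this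
  obtain ⟨s, hs⟩ := this
  rw [nbrF, Finset.mem_filter] at hs
  obtain ⟨-, hsy0, hsq⟩ := hs
  -- hsy0 : G.Adj y0 s, hsq : G.dist q s = 1
  have hy0s : G.dist y0 s = 1 := by rw [dist_eq_one_iff_adj]; exact hsy0
  have hlow : 2 ≤ G.dist w0 s := by
    have := hG.1.dist_triangle (u := w0) (v := s) (w := y0)
    have hsy0' : G.dist s y0 = 1 := by rw [SimpleGraph.dist_comm]; exact hy0s
    omega
  have hhigh : G.dist w0 s ≤ 3 := by
    have := hG.1.dist_triangle (u := w0) (v := q) (w := s)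
    omega
  rcases (show G.dist w0 s = 2 ∨ G.dist w0 s = 3 by omega) with hws | hws
  · -- a₂ > 0 contradiction
    have hadjqs : G.Adj q s := by rwa [dist_eq_one_iff_adj] at hsq
    exact noSame hG hd hi1 hno1 h2 hq1 hws hadjqs
  · -- a₃ > 0 contradiction via odd_case
    exact odd_case hG hd hi1 hno1 h2 hEv hdvd (j := 3) (by omega) hd3 (by omega)
      h3 hws hsy0
end SmithAux


/-- **Smith's theorem.**  Let `G` be a distance-regular graph of diameter `d ≥ 2` with
valency `k ≥ 3` which is imprimitive, i.e. some distance-`i` graph (`1 ≤ i ≤ d`) is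
disconnected.  Then `G` is bipartite or antipodal (the relation "equal or at distance
`d`" is an equivalence relation). -/
theorem smith_theorem {V : Type*} [Fintype V] (G : SimpleGraph V)
    (d : ℕ) (b c : ℕ → ℕ) (k : ℕ) (hd : 2 ≤ d) (hk3 : 3 ≤ k)
    (hG : IsDistRegular G d b c) (hk : b 0 = k)
    (himprimitive : ∃ i : ℕ, 1 ≤ i ∧ i ≤ d ∧ ¬ (distGraph G i).Connected) :
    G.Colorable 2 ∨ Equivalence (fun u v : V => u = v ∨ G.dist u v = d) := by
  classical
  obtain ⟨i0, hi1, hid, hdisc⟩ := himprimitive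
  have hconn := hG.1
  have hno1 : ¬ InJ G i0 1 := inJ_one_false hG hd hi1 hdisc
  have hJi0 : InJ G i0 i0 := inJ_i0 hG hd hi1 hid
  have hex : ∃ j : ℕ, 1 ≤ j ∧ InJ G i0 j := ⟨i0, hi1, hJi0⟩
  set t := Nat.find hex with htdef
  obtain ⟨ht1, htJ⟩ := Nat.find_spec hex
  have hmin : ∀ j, j < t → ¬ (1 ≤ j ∧ InJ G i0 j) := fun j hj => Nat.find_min hex hj
  have ht2 : 2 ≤ t := by
    by_contra hlt
    have he1 : t = 1 := by omega
    exact hno1 (he1 ▸ htJ)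
  have htd : t ≤ d := inJ_le hG hd htJ
  have hdvd : ∀ j, InJ G i0 j → t ∣ j := by
    intro j
    induction j using Nat.strong_induction_on with
    | _ j ih =>
      intro hj
      rcases Nat.eq_zero_or_pos j with h0 | h0
      · simp [h0]
      · have hjt : t ≤ j := by
          by_contra hlt
          exact hmin j (by omega) ⟨h0, hj⟩
        have hsub : InJ G i0 (j - t) := inJ_sub hG hd hi1 hj htJ hjt
        obtain ⟨m, hm⟩ := ih (j - t) (by omega) hsub
        exact ⟨m + 1, by rw [Nat.mul_add, Nat.mul_one, ← hm]; omega⟩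
  have hmult : ∀ n : ℕ, n * t ≤ d → InJ G i0 (n * t) := by
    intro n
    induction n with
    | zero => intro _; simpa using inJ_zero hG i0
    | succ n ihn =>
      intro hnd
      have he : (n+1) * t = n * t + t := by ring
      rw [he] at hnd ⊢
      exact inJ_add hG hd hi1 (ihn (by omega)) htJ hnd
  by_cases htd' : t = d
  · -- antipodal
    right
    refine ⟨fun x => Or.inl rfl, fun {x y} h => ?_, fun {x y z} h1 h2 => ?_⟩
    · rcases h with rfl | h
      · exact Or.inl rfl
      · exact Or.inr (by rwa [SimpleGraph.dist_comm])
    · rcases h1 with rfl | h1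
      · exact h2
      · rcases h2 with rfl | h2
        · exact Or.inr h1
        · have hdJ : InJ G i0 d := htd' ▸ htJ
          have r1 := reach_of_dist hG hd hi1 hdJ h1
          have r2 := reach_of_dist hG hd hi1 hdJ h2
          have hj : InJ G i0 (G.dist x z) := ⟨x, z, r1.trans r2, rfl⟩
          obtain ⟨m, hm⟩ := hdvd _ hj
          have hle := dist_le_d hG hd x z
          rcases m with _ | m
          · left
            rw [Nat.mul_zero] at hm
            rwa [← hG.1.dist_eq_zero_iff]
          · right
            have hge : t ≤ G.dist x z := by
              rw [hm]
              calc t = t * 1 := by ring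
                _ ≤ t * (m+1) := Nat.mul_le_mul_left t (by omega)
            omega
  · by_cases ht2' : t = 2
    · -- bipartite
      left
      have hd3 : 3 ≤ d := by omega
      have h2 : InJ G i0 2 := ht2' ▸ htJ
      have hEv : ∀ jj : ℕ, 2 ∣ jj → jj ≤ d → InJ G i0 jj := by
        rintro jj ⟨n, rfl⟩ hjj
        have hmt := hmult n (by rw [ht2']; omega)
        rw [ht2'] at hmt
        rwa [Nat.mul_comm] at hmt
      have hdvd2 : ∀ jj : ℕ, InJ G i0 jj → 2 ∣ jj := fun jj hjj => ht2' ▸ hdvd jj hjj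
      obtain ⟨x0⟩ := hconn.nonempty
      have hvalid : ∀ {u v : V}, G.Adj u v → (G.dist x0 u) % 2 ≠ (G.dist x0 v) % 2 := by
        intro u v hadj heq
        have h1 : G.dist u v = 1 := by rw [dist_eq_one_iff_adj]; exact hadj
        have t1 := hconn.dist_triangle (u := x0) (v := u) (w := v)
        have t2 := hconn.dist_triangle (u := x0) (v := v) (w := u)
        have hvu : G.dist v u = 1 := by rw [SimpleGraph.dist_comm]; exact h1
        have hne : G.dist x0 u ≠ G.dist x0 v := by
          intro he
          have hjd : G.dist x0 u ≤ d := dist_le_d hG hd x0 u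
          rcases Nat.eq_zero_or_pos (G.dist x0 u) with h0 | h0
          · have hu : x0 = u := by rw [← hG.1.dist_eq_zero_iff]; omega
            have hv : x0 = v := by rw [← hG.1.dist_eq_zero_iff]; omega
            subst hu
            rw [← hv] at hadj
            exact G.loopless.irrefl x0 hadj
          · by_cases hpar : 2 ∣ G.dist x0 u
            · exact noSame hG hd hi1 hno1 (hEv _ hpar hjd) rfl he.symm hadj
            · rcases (show G.dist x0 u = 1 ∨ 3 ≤ G.dist x0 u by omega) with h1' | h3'
              · exact j1_case hG hd hi1 hno1 h2 hEv hdvd2 hd3 (x := x0) (y := u) (z := v)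
                  h1' (by omega) hadj
              · exact odd_case hG hd hi1 hno1 h2 hEv hdvd2 h3' hjd hpar
                  (x := x0) (y := u) (z := v) rfl (by omega) hadj
        omega
      exact ⟨SimpleGraph.Coloring.mk (fun v => (⟨G.dist x0 v % 2, by omega⟩ : Fin 2))
        (fun {u v} hadj heq => hvalid hadj (by simpa using congrArg Fin.val heq))⟩
    · -- 3 ≤ t < d : impossible
      exfalso
      have ht3 : 3 ≤ t := by omega
      have htltd : t < d := by omega
      have huniq : ∀ (x w1 w2 : V), G.dist x w1 = t → G.dist x w2 = t →
          G.dist w1 w2 ≤ 2 → w1 = w2 := by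
        intro x w1 w2 hx1 hx2 hle
        by_contra hne
        have r1 := reach_of_dist hG hd hi1 htJ hx1
        have r2 := reach_of_dist hG hd hi1 htJ hx2
        have hj : InJ G i0 (G.dist w1 w2) := ⟨w1, w2, r1.symm.trans r2, rfl⟩
        have hpos : 0 < G.dist w1 w2 := hconn.pos_dist_of_ne hne
        exact hmin _ (by omega) ⟨hpos, hj⟩
      have hct1 : c (t+1) ≤ 1 := by
        obtain ⟨x, y, hxy⟩ := pair_at hG hd (show t+1 ≤ d by omega)
        have hcard := hG.2.2.2 (t+1) (by omega) x y hxy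
        by_contra hgt
        have h2' : 1 < {w : V | G.Adj y w ∧ G.dist x w = (t+1) - 1}.ncard := by omega
        rw [Set.one_lt_ncard_iff (Set.toFinite _)] at h2'
        obtain ⟨w1, w2, ⟨ha1, hd1⟩, ⟨ha2, hd2⟩, hne⟩ := h2'
        have he : t + 1 - 1 = t := by omega
        rw [he] at hd1 hd2
        have hw12 : G.dist w1 w2 ≤ 2 := by
          have tt := hconn.dist_triangle (u := w1) (v := y) (w := w2)
          have e1 : G.dist w1 y = 1 := by
            rw [SimpleGraph.dist_comm, dist_eq_one_iff_adj]; exact ha1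
          have e2 : G.dist y w2 = 1 := by rw [dist_eq_one_iff_adj]; exact ha2
          omega
        exact hne (huniq x w1 w2 hd1 hd2 hw12)
      have hbt1 : b (t-1) ≤ 1 := by
        obtain ⟨x, y, hxy⟩ := pair_at hG hd (show t-1 ≤ d by omega)
        have hcard := hG.2.2.1 (t-1) (by omega) x y hxy
        by_contra hgt
        have h2' : 1 < {w : V | G.Adj y w ∧ G.dist x w = (t-1) + 1}.ncard := by omega
        rw [Set.one_lt_ncard_iff (Set.toFinite _)] at h2'
        obtain ⟨w1, w2, ⟨ha1, hd1⟩, ⟨ha2, hd2⟩, hne⟩ := h2'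
        have he : t - 1 + 1 = t := by omega
        rw [he] at hd1 hd2
        have hw12 : G.dist w1 w2 ≤ 2 := by
          have tt := hconn.dist_triangle (u := w1) (v := y) (w := w2)
          have e1 : G.dist w1 y = 1 := by
            rw [SimpleGraph.dist_comm, dist_eq_one_iff_adj]; exact ha1
          have e2 : G.dist y w2 = 1 := by rw [dist_eq_one_iff_adj]; exact ha2
          omega
        exact hne (huniq x w1 w2 hd1 hd2 hw12)
      have hcmono : c t ≤ c (t+1) := by
        obtain ⟨u, v, huv⟩ := pair_at hG hd (show t+1 ≤ d by omega)
        obtain ⟨w, hw1, hw2⟩ := midpt hG (show G.dist u v = 1 + t by omega)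
        have hS1 := hG.2.2.2 t (by omega) w v hw2
        have hS2 := hG.2.2.2 (t+1) (by omega) u v huv
        have hsub : {y' : V | G.Adj v y' ∧ G.dist w y' = t - 1}
            ⊆ {y' : V | G.Adj v y' ∧ G.dist u y' = (t+1) - 1} := by
          rintro y' ⟨hadj, hdy⟩
          refine ⟨hadj, ?_⟩
          have e1 : G.dist v y' = 1 := by rw [dist_eq_one_iff_adj]; exact hadj
          have e2 : G.dist y' v = 1 := by rw [SimpleGraph.dist_comm]; exact e1
          have tt1 := hconn.dist_triangle (u := u) (v := w) (w := y')
          have tt2 := hconn.dist_triangle (u := u) (v := y') (w := v)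
          omega
        have hmon := Set.ncard_le_ncard hsub (Set.toFinite _)
        omega
      have hbmono : b t ≤ b (t-1) := by
        obtain ⟨u, v, huv⟩ := pair_at hG hd (show t ≤ d by omega)
        obtain ⟨w, hw1, hw2⟩ := midpt hG (show G.dist u v = 1 + (t-1) by omega)
        have hS1 := hG.2.2.1 t (by omega) u v huv
        have hS2 := hG.2.2.1 (t-1) (by omega) w v hw2
        have hsub : {y' : V | G.Adj v y' ∧ G.dist u y' = t + 1}
            ⊆ {y' : V | G.Adj v y' ∧ G.dist w y' = (t-1) + 1} := by
          rintro y' ⟨hadj, hdy⟩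
          refine ⟨hadj, ?_⟩
          have e1 : G.dist v y' = 1 := by rw [dist_eq_one_iff_adj]; exact hadj
          have tt1 := hconn.dist_triangle (u := w) (v := v) (w := y')
          have tt2 := hconn.dist_triangle (u := u) (v := w) (w := y')
          omega
        have hmon := Set.ncard_le_ncard hsub (Set.toFinite _)
        omega
      have hpart : c t + b t = k := by
        obtain ⟨x, y, hxy⟩ := pair_at hG hd (show t ≤ d by omega)
        have hmid : (nbrF G x y t).card = 0 := by
          rw [Finset.card_eq_zero, nbrF, Finset.filter_eq_empty_iff]
          rintro w - ⟨hadj, hw⟩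
          exact noSame hG hd hi1 hno1 htJ hxy hw hadj
        have hs := nbr_split hG (by omega) (by omega) hxy
        omega
      have hcp : 1 ≤ c t := c_pos hG hd (by omega) (by omega)
      omega
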